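/- Let M ≥ 1 and λ_a, λ_b ∈ ℝ^M with λ_a(m) > 0 and λ_b(m) > 0 for all m and G(λ_a, λ_b) > 0. Fix m₀ ∈ {1,…,M}, and for t > 0 let λ_a[t] denote the vector λ_a with its m₀-th entry replaced by t. Then the function p(t) = Q(G(λ_a[t], λ_b)) is differentiable at t = λ_a(m₀) and its derivative there satisfies |p'(λ_a(m₀))| ≤ (1/(2√(2π) G)) · e^{−G²/2} · | 1 − ( 2/(1 + λ_a(m₀)/λ_b(m₀)) )² |, where G = G(λ_a, λ_b). -/

import Mathlib

open Real MeasureTheory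

/-- The Gaussian tail function `Q(t) = ∫_t^∞ (1/√(2π)) e^{−x²/2} dx`. -/
noncomputable def gaussQ (t : ℝ) : ℝ :=
  ∫ x in Set.Ici t, (1 / Real.sqrt (2 * π)) * Real.exp (-x ^ 2 / 2)

/-- `G(λ_a, λ_b) = √(∑ (λ_a(m)−λ_b(m))²/(2(λ_a(m)+λ_b(m))))`. -/
noncomputable def Gfun {M : ℕ} (lam_a lam_b : Fin M → ℝ) : ℝ :=
  Real.sqrt (∑ m : Fin M, (lam_a m - lam_b m) ^ 2 / (2 * (lam_a m + lam_b m)))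

lemma gauss_integrable : Integrable (fun x : ℝ => (1 / Real.sqrt (2 * π)) * Real.exp (-x ^ 2 / 2)) := by
  have h : Integrable (fun x : ℝ => Real.exp (-(1/2 : ℝ) * x ^ 2)) :=
    integrable_exp_neg_mul_sq (by norm_num)
  have heq : (fun x : ℝ => (1 / Real.sqrt (2 * π)) * Real.exp (-x ^ 2 / 2))
      = fun x : ℝ => (1 / Real.sqrt (2 * π)) * Real.exp (-(1/2 : ℝ) * x ^ 2) := by
    funext x; ring_nf
  rw [heq]
  exact h.const_mul _

lemma gaussQ_hasDeriv (t : ℝ) :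
    HasDerivAt gaussQ (-((1 / Real.sqrt (2 * π)) * Real.exp (-t ^ 2 / 2))) t := by
  set φ : ℝ → ℝ := fun x => (1 / Real.sqrt (2 * π)) * Real.exp (-x ^ 2 / 2) with hφ
  have hint : Integrable φ := gauss_integrable
  have hcont : Continuous φ := by
    apply Continuous.mul continuous_const
    exact Real.continuous_exp.comp (by continuity)
  have hEq : ∀ u : ℝ, gaussQ u = (∫ x, φ x) - ((∫ x in Set.Iic (0:ℝ), φ x) + ∫ x in (0:ℝ)..u, φ x) := by
    intro u
    have h1 : (∫ x in Set.Iic u, φ x) + (∫ x in Set.Ici u, φ x) = ∫ x, φ x := by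
      rw [integral_Iic_eq_integral_Iio]
      have := integral_add_compl (measurableSet_Iio (a := u)) hint
      simpa [Set.compl_Iio] using this
    have h2 : (∫ x in Set.Iic u, φ x) - (∫ x in Set.Iic (0:ℝ), φ x) = ∫ x in (0:ℝ)..u, φ x :=
      intervalIntegral.integral_Iic_sub_Iic hint.integrableOn hint.integrableOn
    have h3 : gaussQ u = ∫ x in Set.Ici u, φ x := rfl
    rw [h3]; linarith
  have hderiv : HasDerivAt (fun u => ∫ x in (0:ℝ)..u, φ x) (φ t) t :=
    intervalIntegral.integral_hasDerivAt_right hint.intervalIntegrable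
      (hcont.stronglyMeasurableAtFilter _ _) hcont.continuousAt
  have h4 : HasDerivAt (fun u => (∫ x, φ x) - ((∫ x in Set.Iic (0:ℝ), φ x) + ∫ x in (0:ℝ)..u, φ x))
      (-(φ t)) t := by
    simpa using (hasDerivAt_const t (∫ x, φ x)).fun_sub ((hasDerivAt_const t _).fun_add hderiv)
  exact h4.congr_of_eventuallyEq (Filter.Eventually.of_forall hEq)

/-- With `λ_a(m), λ_b(m) > 0` and `G = G(λ_a,λ_b) > 0`, the
function `p(t) = Q(G(λ_a[t], λ_b))`, where `λ_a[t]` replaces the `m₀`-th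
entry of `λ_a` by `t`, is differentiable at `t = λ_a(m₀)` and
`|p'(λ_a(m₀))| ≤ (1/(2√(2π) G)) e^{−G²/2} |1 − (2/(1+λ_a(m₀)/λ_b(m₀)))²|`. -/
theorem stmt15 (M : ℕ) (hM : 1 ≤ M) (lam_a lam_b : Fin M → ℝ)
    (ha : ∀ m, 0 < lam_a m) (hb : ∀ m, 0 < lam_b m)
    (hG : 0 < Gfun lam_a lam_b) (m₀ : Fin M)
    (p : ℝ → ℝ)
    (hp : ∀ t : ℝ, p t = gaussQ (Gfun (Function.update lam_a m₀ t) lam_b)) :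
    DifferentiableAt ℝ p (lam_a m₀)
    ∧ |deriv p (lam_a m₀)|
      ≤ (1 / (2 * Real.sqrt (2 * π) * Gfun lam_a lam_b))
          * Real.exp (-(Gfun lam_a lam_b) ^ 2 / 2)
          * |1 - (2 / (1 + lam_a m₀ / lam_b m₀)) ^ 2| := by
  set a := lam_a m₀ with haa
  set b := lam_b m₀ with hbb
  have ha0 : 0 < a := ha m₀
  have hb0 : 0 < b := hb m₀
  have hab : (0:ℝ) < a + b := by linarith
  set G := Gfun lam_a lam_b with hGdef
  set D : ℝ := (a - b) * (a + 3 * b) / (2 * (a + b) ^ 2) with hD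
  set F : ℝ → ℝ := fun t => ∑ m : Fin M,
      (Function.update lam_a m₀ t m - lam_b m) ^ 2 /
        (2 * (Function.update lam_a m₀ t m + lam_b m)) with hF
  have hFa : F a = ∑ m : Fin M, (lam_a m - lam_b m) ^ 2 / (2 * (lam_a m + lam_b m)) := by
    simp [hF, haa, Function.update_eq_self]
  have hFa_nonneg : 0 ≤ F a := by
    rw [hFa]
    apply Finset.sum_nonneg
    intro m _
    have := ha m; have := hb m
    positivity
  have hGFa : G = Real.sqrt (F a) := by rw [hGdef, Gfun, hFa]
  have hFane : F a ≠ 0 := by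
    intro h
    rw [h, Real.sqrt_zero] at hGFa
    exact absurd hGFa.symm (ne_of_lt hG)
  -- derivative of F
  have hFderiv : HasDerivAt F D a := by
    have hsum : HasDerivAt F (∑ m : Fin M, if m = m₀ then D else 0) a := by
      apply HasDerivAt.fun_sum
      intro m _
      by_cases hm : m = m₀
      · subst hm
        simp only [if_pos rfl]
        have hnum : HasDerivAt (fun t : ℝ => (t - b) ^ 2) (2 * (a - b)) a := by
          simpa using ((hasDerivAt_id a).sub_const b).fun_pow 2
        have hden : HasDerivAt (fun t : ℝ => 2 * (t + b)) 2 a := by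
          simpa using ((hasDerivAt_id a).add_const b).const_mul 2
        have hdne : 2 * (a + b) ≠ 0 := by positivity
        have hdiv := hnum.div hden hdne
        have hval : (2 * (a - b) * (2 * (a + b)) - (a - b) ^ 2 * 2) / (2 * (a + b)) ^ 2 = D := by
          rw [hD]; field_simp; ring
        rw [hval] at hdiv
        apply hdiv.congr_of_eventuallyEq
        apply Filter.Eventually.of_forall
        intro t
        simp [Function.update_self, hbb]
      · simp only [if_neg hm]
        apply (hasDerivAt_const a ((lam_a m - lam_b m) ^ 2 / (2 * (lam_a m + lam_b m)))).congr_of_eventuallyEq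
        apply Filter.Eventually.of_forall
        intro t
        simp [Function.update_of_ne hm]
    simpa [Finset.sum_ite_eq' Finset.univ m₀ (fun _ => D)] using hsum
  -- derivative of sqrt ∘ F
  have hgderiv : HasDerivAt (fun t => Real.sqrt (F t)) (D / (2 * G)) a := by
    have := hFderiv.sqrt hFane
    rwa [← hGFa] at this
  -- derivative of p
  have hpeq : p = fun t => gaussQ (Real.sqrt (F t)) := by
    funext t
    rw [hp t]
    rfl
  have hpd : HasDerivAt p (-((1 / Real.sqrt (2 * π)) * Real.exp (-G ^ 2 / 2)) * (D / (2 * G))) a := by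
    rw [hpeq]
    have hcomp := HasDerivAt.comp a (gaussQ_hasDeriv (Real.sqrt (F a))) hgderiv
    rw [← hGFa] at hcomp
    simpa [Function.comp_def] using hcomp
  refine ⟨hpd.differentiableAt, ?_⟩
  rw [hpd.deriv]
  -- numeric bound
  set E : ℝ := 1 - (2 / (1 + a / b)) ^ 2 with hE
  have hDE : D = E / 2 := by
    rw [hD, hE]
    have h2 : (1 : ℝ) + a / b ≠ 0 := by positivity
    field_simp
    ring
  have hsqrt2pi : 0 < Real.sqrt (2 * π) := Real.sqrt_pos.2 (by positivity)
  have hexp : 0 < Real.exp (-G ^ 2 / 2) := Real.exp_pos _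
  have habs : |(-((1 / Real.sqrt (2 * π)) * Real.exp (-G ^ 2 / 2)) * (D / (2 * G)))|
      = (1 / Real.sqrt (2 * π)) * Real.exp (-G ^ 2 / 2) * (|D| / (2 * G)) := by
    rw [abs_mul, abs_neg, abs_div, abs_mul]
    rw [abs_of_pos (by positivity : (0:ℝ) < 1 / Real.sqrt (2 * π)), abs_of_pos hexp,
      abs_of_pos (by positivity : (0:ℝ) < 2 * G)]
  rw [habs, hDE, abs_div, abs_of_pos (by norm_num : (0:ℝ) < 2)]
  have hco : (0:ℝ) < 1 / Real.sqrt (2 * π) * Real.exp (-G ^ 2 / 2) / (2 * G) := by positivity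
  have : 1 / Real.sqrt (2 * π) * Real.exp (-G ^ 2 / 2) * (|E| / 2 / (2 * G))
      = (1 / (2 * Real.sqrt (2 * π) * G) * Real.exp (-G ^ 2 / 2) * |E|) / 2 := by
    ring
  rw [this]
  have hrhs : 0 ≤ 1 / (2 * Real.sqrt (2 * π) * G) * Real.exp (-G ^ 2 / 2) * |E| := by positivity
  linarith
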